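/- arXiv:2504.17895 — 6 statements merged into one kernel-verified Lean document; each statement's English description precedes it below -/
import Mathlib

section
/- Let X be a normed space and z(t_j, α_l) ∈ X for 0 ≤ j ≤ M, 0 ≤ l ≤ L with uniform steps Δt > 0 and Δα > 0. Then for all j, l: ‖z(t_j, α_l)‖² ≤ 3‖z(t_0, α_l)‖² + 3(jΔt) Σ_{s=1}^{j} Δt ‖D^t z(t_s, α_0)‖² + 3(jΔt)(lΔα) Σ_{s=1}^{j} Σ_{n=1}^{l} ΔtΔα ‖D^α D^t z(t_s, α_n)‖². -/
private lemma tele {X : Type*} [AddCommGroup X] (f : ℕ → X) (j : ℕ) :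
    ∑ s ∈ Finset.Icc 1 j, (f s - f (s - 1)) = f j - f 0 := by
  induction j with
  | zero => simp
  | succ n ih =>
    rw [Finset.sum_Icc_succ_top (by omega), ih]
    simp only [Nat.add_sub_cancel]
    abel

private lemma cs_bound {X : Type*} [NormedAddCommGroup X] {ι : Type*} (s : Finset ι)
    (f : ι → X) : ‖∑ i ∈ s, f i‖ ^ 2 ≤ (s.card : ℝ) * ∑ i ∈ s, ‖f i‖ ^ 2 := by
  calc ‖∑ i ∈ s, f i‖ ^ 2 ≤ (∑ i ∈ s, ‖f i‖) ^ 2 := by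
        apply pow_le_pow_left₀ (norm_nonneg _) (norm_sum_le _ _)
    _ ≤ (s.card : ℝ) * ∑ i ∈ s, ‖f i‖ ^ 2 := sq_sum_le_card_mul_sum_sq

/-- Lemma 1 of the paper: pointwise bound for a doubly-indexed family by its
initial values and its first/second order backward difference quotients. -/
theorem pointwise_bound_two_indices
    {X : Type*} [NormedAddCommGroup X] [NormedSpace ℝ X]
    (M L : ℕ) (z : ℕ → ℕ → X) (Δt Δα : ℝ) (hΔt : 0 < Δt) (hΔα : 0 < Δα)
    (Dt : ℕ → ℕ → X) (hDt : ∀ s l, Dt s l = Δt⁻¹ • (z s l - z (s - 1) l))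
    (DaDt : ℕ → ℕ → X) (hDaDt : ∀ s n, DaDt s n = Δα⁻¹ • (Dt s n - Dt s (n - 1)))
    (j : ℕ) (hj : j ≤ M) (l : ℕ) (hl : l ≤ L) :
    ‖z j l‖ ^ 2 ≤
      3 * ‖z 0 l‖ ^ 2
      + 3 * (j * Δt) * ∑ s ∈ Finset.Icc 1 j, Δt * ‖Dt s 0‖ ^ 2
      + 3 * (j * Δt) * (l * Δα) *
          ∑ s ∈ Finset.Icc 1 j, ∑ n ∈ Finset.Icc 1 l, Δt * Δα * ‖DaDt s n‖ ^ 2 := by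
  have hΔt' : Δt ≠ 0 := ne_of_gt hΔt
  have hΔα' : Δα ≠ 0 := ne_of_gt hΔα
  have hDt' : ∀ s m, Δt • Dt s m = z s m - z (s - 1) m := fun s m => by
    rw [hDt, smul_smul, mul_inv_cancel₀ hΔt', one_smul]
  have hDa' : ∀ s n, Δα • DaDt s n = Dt s n - Dt s (n - 1) := fun s n => by
    rw [hDaDt, smul_smul, mul_inv_cancel₀ hΔα', one_smul]
  -- telescope in n
  have hDtl : ∀ s, Δt • Dt s l =
      Δt • Dt s 0 + ∑ n ∈ Finset.Icc 1 l, (Δt * Δα) • DaDt s n := fun s => by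
    have h1 : ∑ n ∈ Finset.Icc 1 l, Δα • DaDt s n = Dt s l - Dt s 0 := by
      rw [show (fun n => Δα • DaDt s n) = fun n => Dt s n - Dt s (n - 1) from
        funext fun n => hDa' s n]
      exact tele (Dt s) l
    calc Δt • Dt s l = Δt • Dt s 0 + Δt • (Dt s l - Dt s 0) := by
          rw [smul_sub]; abel
      _ = _ := by
          rw [← h1, Finset.smul_sum]
          simp [smul_smul]
  -- telescope in s
  have hz : z j l = z 0 l + (∑ s ∈ Finset.Icc 1 j, Δt • Dt s 0)
      + ∑ s ∈ Finset.Icc 1 j, ∑ n ∈ Finset.Icc 1 l, (Δt * Δα) • DaDt s n := by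
    have h1 : ∑ s ∈ Finset.Icc 1 j, Δt • Dt s l = z j l - z 0 l := by
      rw [show (fun s => Δt • Dt s l) = fun s => z s l - z (s - 1) l from
        funext fun s => hDt' s l]
      exact tele (fun s => z s l) j
    have h2 : ∑ s ∈ Finset.Icc 1 j, Δt • Dt s l
        = (∑ s ∈ Finset.Icc 1 j, Δt • Dt s 0)
          + ∑ s ∈ Finset.Icc 1 j, ∑ n ∈ Finset.Icc 1 l, (Δt * Δα) • DaDt s n := by
      rw [← Finset.sum_add_distrib]
      exact Finset.sum_congr rfl fun s _ => hDtl s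
    rw [add_assoc, ← h2, h1]
    abel
  set A := ‖z 0 l‖ with hA
  set B := ‖∑ s ∈ Finset.Icc 1 j, Δt • Dt s 0‖ with hB
  set C := ‖∑ s ∈ Finset.Icc 1 j, ∑ n ∈ Finset.Icc 1 l, (Δt * Δα) • DaDt s n‖ with hC
  have hzn : ‖z j l‖ ≤ A + B + C := by
    rw [hz]; exact le_trans (norm_add_le _ _) (add_le_add_left (norm_add_le _ _) _)
  have hsq : ‖z j l‖ ^ 2 ≤ 3 * A ^ 2 + 3 * B ^ 2 + 3 * C ^ 2 := by
    nlinarith [norm_nonneg (z j l), norm_nonneg (z 0 l), hB ▸ norm_nonneg _,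
      hC ▸ norm_nonneg _, sq_nonneg (A - B), sq_nonneg (A - C), sq_nonneg (B - C),
      sq_nonneg (A + B + C)]
  have hBsq : B ^ 2 ≤ (j * Δt) * ∑ s ∈ Finset.Icc 1 j, Δt * ‖Dt s 0‖ ^ 2 := by
    have := cs_bound (Finset.Icc 1 j) (fun s => Δt • Dt s 0)
    rw [Nat.card_Icc] at this
    calc B ^ 2 ≤ (j : ℝ) * ∑ s ∈ Finset.Icc 1 j, ‖Δt • Dt s 0‖ ^ 2 := by
          simpa using this
      _ = (j * Δt) * ∑ s ∈ Finset.Icc 1 j, Δt * ‖Dt s 0‖ ^ 2 := by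
          rw [Finset.mul_sum, Finset.mul_sum]
          apply Finset.sum_congr rfl
          intro s _
          rw [norm_smul, Real.norm_eq_abs, abs_of_pos hΔt, mul_pow]
          ring
  have hCsq : C ^ 2 ≤ (j * Δt) * (l * Δα) *
      ∑ s ∈ Finset.Icc 1 j, ∑ n ∈ Finset.Icc 1 l, Δt * Δα * ‖DaDt s n‖ ^ 2 := by
    have h2 : ∑ s ∈ Finset.Icc 1 j, ∑ n ∈ Finset.Icc 1 l, (Δt * Δα) • DaDt s n
        = ∑ p ∈ Finset.Icc 1 j ×ˢ Finset.Icc 1 l, (Δt * Δα) • DaDt p.1 p.2 := by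
      rw [Finset.sum_product]
    have := cs_bound (Finset.Icc 1 j ×ˢ Finset.Icc 1 l)
      (fun p => (Δt * Δα) • DaDt p.1 p.2)
    rw [Finset.card_product, Nat.card_Icc, Nat.card_Icc] at this
    calc C ^ 2 ≤ ((j * l : ℕ) : ℝ) *
          ∑ p ∈ Finset.Icc 1 j ×ˢ Finset.Icc 1 l, ‖(Δt * Δα) • DaDt p.1 p.2‖ ^ 2 := by
          rw [hC, h2]; simpa using this
      _ = (j * Δt) * (l * Δα) *
          ∑ s ∈ Finset.Icc 1 j, ∑ n ∈ Finset.Icc 1 l, Δt * Δα * ‖DaDt s n‖ ^ 2 := by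
          rw [Finset.sum_product, Nat.cast_mul, Finset.mul_sum, Finset.mul_sum]
          apply Finset.sum_congr rfl
          intro s _
          rw [Finset.mul_sum, Finset.mul_sum]
          apply Finset.sum_congr rfl
          intro n _
          rw [norm_smul, Real.norm_eq_abs, abs_of_pos (mul_pos hΔt hΔα), mul_pow]
          ring
  nlinarith [hsq, hBsq, hCsq]
end

section
/- Let H be a real Hilbert space, P : H → H an orthogonal projection, and u(t_j, α_l) ∈ H for 0 ≤ j ≤ M, 0 ≤ l ≤ L with steps Δt_l ≤ T/M and Δα = (α_L - α_0)/L, where L, M ≥ 1. Suppose Σ_{l=0}^{L} ‖(I-P)u(t_0, α_l)‖² + (1/(M+1)) Σ_{j=1}^{M} ‖(I-P)D^t u(t_j, α_0)‖² + (1/N) Σ_{j=1}^{M} Σ_{l=1}^{L} ‖(I-P)D^t D^α u(t_j, α_l)‖² = Λ, where N = (M+1)(L+1). Then max over all j, l of ‖(I-P)u(t_j, α_l)‖² ≤ C Λ with C = 3 max(1, 2T², 4T²(α_L - α_0)²). -/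
open scoped RealInnerProductSpace

set_option maxHeartbeats 800000

private lemma telescope_Icc {G : Type*} [AddCommGroup G] (f : ℕ → G) (n : ℕ) :
    ∑ i ∈ Finset.Icc 1 n, (f i - f (i - 1)) = f n - f 0 := by
  induction n with
  | zero => simp
  | succ n ih =>
    rw [Finset.sum_Icc_succ_top (by omega), ih]
    simp only [Nat.add_sub_cancel]
    abel

private lemma norm_sum_sq_le_card {H : Type*} [NormedAddCommGroup H] [InnerProductSpace ℝ H]
    {ι : Type*} (s : Finset ι) (f : ι → H) :
    ‖∑ i ∈ s, f i‖ ^ 2 ≤ s.card * ∑ i ∈ s, ‖f i‖ ^ 2 := by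
  calc ‖∑ i ∈ s, f i‖ ^ 2 ≤ (∑ i ∈ s, ‖f i‖) ^ 2 :=
        pow_le_pow_left₀ (norm_nonneg _) (norm_sum_le _ _) 2
    _ ≤ s.card * ∑ i ∈ s, ‖f i‖ ^ 2 := sq_sum_le_card_mul_sum_sq

private lemma norm_add3_sq {H : Type*} [NormedAddCommGroup H] [InnerProductSpace ℝ H]
    (a b c : H) : ‖a + b + c‖ ^ 2 ≤ 3 * (‖a‖ ^ 2 + ‖b‖ ^ 2 + ‖c‖ ^ 2) := by
  have h1 := norm_add_le (a + b) c
  have h2 := norm_add_le a b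
  have h3 := norm_nonneg (a + b + c)
  nlinarith [norm_nonneg a, norm_nonneg b, norm_nonneg c, norm_nonneg (a + b),
    sq_nonneg (‖a‖ - ‖b‖), sq_nonneg (‖a‖ - ‖c‖), sq_nonneg (‖b‖ - ‖c‖)]

/-- Lemma 2 of the paper: pointwise-in-time (and in the parameter) bound for the
projection error in terms of the POD eigenvalue tail `Λ`. -/
theorem pointwise_projection_bound
    {H : Type*} [NormedAddCommGroup H] [InnerProductSpace ℝ H]
    (P : H →ₗ[ℝ] H)
    (hPidem : ∀ x, P (P x) = P x)
    (hPsa : ∀ x y : H, ⟪P x, y⟫ = ⟪x, P y⟫)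
    (M L : ℕ) (hM : 1 ≤ M) (hL : 1 ≤ L)
    (u : ℕ → ℕ → H) (T α0 αL : ℝ) (hT : 0 < T) (hα : α0 < αL)
    (Δt : ℕ → ℝ) (hΔt : ∀ l ≤ L, 0 < Δt l ∧ Δt l ≤ T / M)
    (Δα : ℝ) (hΔα : Δα = (αL - α0) / L)
    (Dt : ℕ → ℕ → H) (hDt : ∀ j l, Dt j l = (Δt l)⁻¹ • (u j l - u (j - 1) l))
    (DtDa : ℕ → ℕ → H) (hDtDa : ∀ j l, DtDa j l = Δα⁻¹ • (Dt j l - Dt j (l - 1)))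
    (Λ : ℝ)
    (hsum :
      (∑ l ∈ Finset.range (L + 1), ‖u 0 l - P (u 0 l)‖ ^ 2)
      + (1 / (M + 1 : ℝ)) * ∑ j ∈ Finset.Icc 1 M, ‖Dt j 0 - P (Dt j 0)‖ ^ 2
      + (1 / ((M + 1) * (L + 1) : ℝ)) *
          ∑ j ∈ Finset.Icc 1 M, ∑ l ∈ Finset.Icc 1 L, ‖DtDa j l - P (DtDa j l)‖ ^ 2
        = Λ) :
    ∀ j ≤ M, ∀ l ≤ L,
      ‖u j l - P (u j l)‖ ^ 2 ≤
        3 * max 1 (max (2 * T ^ 2) (4 * T ^ 2 * (αL - α0) ^ 2)) * Λ := by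
  intro j hj l hl
  set Q : H →ₗ[ℝ] H := LinearMap.id - P with hQdef
  have hQ : ∀ x : H, x - P x = Q x := fun x => rfl
  simp only [hQ] at hsum ⊢
  -- basic positivity facts
  have hδ : (0:ℝ) < αL - α0 := sub_pos.mpr hα
  have hmpos : (0:ℝ) < M := by exact_mod_cast Nat.lt_of_lt_of_le Nat.zero_lt_one hM
  have hlpos : (0:ℝ) < L := by exact_mod_cast Nat.lt_of_lt_of_le Nat.zero_lt_one hL
  have hm1 : (1:ℝ) ≤ M := by exact_mod_cast hM
  have hl1 : (1:ℝ) ≤ L := by exact_mod_cast hL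
  have hΔαpos : 0 < Δα := by rw [hΔα]; positivity
  have hΔtl : 0 < Δt l ∧ Δt l ≤ T / M := hΔt l hl
  -- increments
  have hstep_t : ∀ i l', l' ≤ L → u i l' - u (i - 1) l' = Δt l' • Dt i l' := by
    intro i l' hl'
    rw [hDt i l', smul_smul, mul_inv_cancel₀ (hΔt l' hl').1.ne', one_smul]
  have hstep_α : ∀ i k, Dt i k - Dt i (k - 1) = Δα • DtDa i k := by
    intro i k
    rw [hDtDa i k, smul_smul, mul_inv_cancel₀ hΔαpos.ne', one_smul]
  -- decomposition of Dt i l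
  have hDt_decomp : ∀ i, Q (Dt i l) =
      Q (Dt i 0) + Δα • ∑ k ∈ Finset.Icc 1 l, Q (DtDa i k) := by
    intro i
    have ht : Dt i l = Dt i 0 + ∑ k ∈ Finset.Icc 1 l, Δα • DtDa i k := by
      have := telescope_Icc (fun k => Dt i k) l
      simp only [hstep_α] at this
      rw [this]; abel
    rw [ht, map_add, map_sum]
    simp only [map_smul, Finset.smul_sum]
  -- decomposition of u j l
  have hu_decomp : Q (u j l) = Q (u 0 l)
      + Δt l • (∑ i ∈ Finset.Icc 1 j, Q (Dt i 0))
      + (Δt l * Δα) • (∑ i ∈ Finset.Icc 1 j, ∑ k ∈ Finset.Icc 1 l, Q (DtDa i k)) := by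
    have ht : u j l = u 0 l + ∑ i ∈ Finset.Icc 1 j, Δt l • Dt i l := by
      have := telescope_Icc (fun i => u i l) j
      simp only [hstep_t _ _ hl] at this
      rw [this]; abel
    rw [ht, map_add, map_sum]
    simp only [map_smul]
    rw [← Finset.smul_sum]
    have : ∑ i ∈ Finset.Icc 1 j, Q (Dt i l)
        = (∑ i ∈ Finset.Icc 1 j, Q (Dt i 0))
          + Δα • ∑ i ∈ Finset.Icc 1 j, ∑ k ∈ Finset.Icc 1 l, Q (DtDa i k) := by
      simp only [hDt_decomp]
      rw [Finset.sum_add_distrib, Finset.smul_sum]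
    rw [this, smul_add, smul_smul, add_assoc]
  -- the three sums
  set S1 := ∑ l' ∈ Finset.range (L + 1), ‖Q (u 0 l')‖ ^ 2 with hS1def
  set S2 := ∑ j' ∈ Finset.Icc 1 M, ‖Q (Dt j' 0)‖ ^ 2 with hS2def
  set S3 := ∑ j' ∈ Finset.Icc 1 M, ∑ l' ∈ Finset.Icc 1 L, ‖Q (DtDa j' l')‖ ^ 2 with hS3def
  have hS1 : 0 ≤ S1 := Finset.sum_nonneg fun _ _ => by positivity
  have hS2 : 0 ≤ S2 := Finset.sum_nonneg fun _ _ => by positivity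
  have hS3 : 0 ≤ S3 := Finset.sum_nonneg fun _ _ => Finset.sum_nonneg fun _ _ => by positivity
  -- term A
  have hA : ‖Q (u 0 l)‖ ^ 2 ≤ S1 :=
    Finset.single_le_sum (f := fun l' => ‖Q (u 0 l')‖ ^ 2) (fun _ _ => by positivity)
      (Finset.mem_range.mpr (by omega))
  -- term B
  have hBX : ‖∑ i ∈ Finset.Icc 1 j, Q (Dt i 0)‖ ^ 2 ≤ (M : ℝ) * S2 := by
    calc ‖∑ i ∈ Finset.Icc 1 j, Q (Dt i 0)‖ ^ 2
        ≤ (Finset.Icc 1 j).card * ∑ i ∈ Finset.Icc 1 j, ‖Q (Dt i 0)‖ ^ 2 :=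
          norm_sum_sq_le_card _ _
      _ ≤ (M : ℝ) * S2 := by
          apply mul_le_mul
          · rw [Nat.card_Icc]; exact_mod_cast (by omega : j + 1 - 1 ≤ M)
          · exact Finset.sum_le_sum_of_subset_of_nonneg
              (Finset.Icc_subset_Icc_right hj) (fun _ _ _ => by positivity)
          · exact Finset.sum_nonneg fun _ _ => by positivity
          · positivity
  have hB : ‖Δt l • (∑ i ∈ Finset.Icc 1 j, Q (Dt i 0))‖ ^ 2
      ≤ 2 * T ^ 2 * (1 / (M + 1 : ℝ) * S2) := by
    rw [norm_smul, Real.norm_eq_abs, mul_pow, sq_abs]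
    have h1 : (Δt l) ^ 2 ≤ (T / M) ^ 2 := pow_le_pow_left₀ hΔtl.1.le hΔtl.2 2
    calc (Δt l) ^ 2 * ‖∑ i ∈ Finset.Icc 1 j, Q (Dt i 0)‖ ^ 2
        ≤ (T / M) ^ 2 * ((M : ℝ) * S2) :=
          mul_le_mul h1 hBX (by positivity) (by positivity)
      _ ≤ 2 * T ^ 2 * (1 / (M + 1 : ℝ) * S2) := by
          have e1 : (T / (M:ℝ)) ^ 2 * ((M:ℝ) * S2) = T ^ 2 * S2 / (M:ℝ) := by
            field_simp
          have e2 : 2 * T ^ 2 * (1 / ((M:ℝ) + 1) * S2) = 2 * T ^ 2 * S2 / ((M:ℝ) + 1) := by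
            ring
          rw [e1, e2, div_le_div_iff₀ hmpos (by positivity)]
          nlinarith [mul_nonneg (sq_nonneg T) hS2]
  -- term C
  have hCY : ‖∑ i ∈ Finset.Icc 1 j, ∑ k ∈ Finset.Icc 1 l, Q (DtDa i k)‖ ^ 2
      ≤ ((M : ℝ) * L) * S3 := by
    have hprod : ∑ i ∈ Finset.Icc 1 j, ∑ k ∈ Finset.Icc 1 l, Q (DtDa i k)
        = ∑ p ∈ Finset.Icc 1 j ×ˢ Finset.Icc 1 l, Q (DtDa p.1 p.2) :=
      (Finset.sum_product' _ _ fun i k => Q (DtDa i k)).symm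
    rw [hprod]
    calc ‖∑ p ∈ Finset.Icc 1 j ×ˢ Finset.Icc 1 l, Q (DtDa p.1 p.2)‖ ^ 2
        ≤ (Finset.Icc 1 j ×ˢ Finset.Icc 1 l).card *
            ∑ p ∈ Finset.Icc 1 j ×ˢ Finset.Icc 1 l, ‖Q (DtDa p.1 p.2)‖ ^ 2 :=
          norm_sum_sq_le_card _ _
      _ ≤ ((M : ℝ) * L) * S3 := by
          apply mul_le_mul
          · rw [Finset.card_product, Nat.card_Icc, Nat.card_Icc]
            have h1 : ((j + 1 - 1) * (l + 1 - 1) : ℕ) ≤ M * L :=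
              Nat.mul_le_mul (by omega) (by omega)
            exact_mod_cast h1
          · rw [hS3def, ← Finset.sum_product' (f := fun a b => ‖Q (DtDa a b)‖ ^ 2)]
            exact Finset.sum_le_sum_of_subset_of_nonneg
              (Finset.product_subset_product (Finset.Icc_subset_Icc_right hj)
                (Finset.Icc_subset_Icc_right hl)) (fun _ _ _ => by positivity)
          · exact Finset.sum_nonneg fun _ _ => by positivity
          · positivity
  have hC : ‖(Δt l * Δα) • (∑ i ∈ Finset.Icc 1 j, ∑ k ∈ Finset.Icc 1 l, Q (DtDa i k))‖ ^ 2
      ≤ 4 * T ^ 2 * (αL - α0) ^ 2 * (1 / ((M + 1) * (L + 1) : ℝ) * S3) := by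
    rw [norm_smul, Real.norm_eq_abs, mul_pow, sq_abs]
    have h1 : (Δt l * Δα) ^ 2 ≤ (T / M * ((αL - α0) / L)) ^ 2 := by
      apply pow_le_pow_left₀ (mul_nonneg hΔtl.1.le hΔαpos.le)
      exact mul_le_mul hΔtl.2 (le_of_eq hΔα) hΔαpos.le (by positivity)
    calc (Δt l * Δα) ^ 2 * ‖∑ i ∈ Finset.Icc 1 j, ∑ k ∈ Finset.Icc 1 l, Q (DtDa i k)‖ ^ 2
        ≤ (T / M * ((αL - α0) / L)) ^ 2 * (((M : ℝ) * L) * S3) :=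
          mul_le_mul h1 hCY (by positivity) (by positivity)
      _ ≤ 4 * T ^ 2 * (αL - α0) ^ 2 * (1 / ((M + 1) * (L + 1) : ℝ) * S3) := by
          have e1 : (T / (M:ℝ) * ((αL - α0) / (L:ℝ))) ^ 2 * (((M:ℝ) * L) * S3)
              = T ^ 2 * (αL - α0) ^ 2 * S3 / ((M:ℝ) * L) := by
            field_simp
          have e2 : 4 * T ^ 2 * (αL - α0) ^ 2 * (1 / (((M:ℝ) + 1) * ((L:ℝ) + 1)) * S3)
              = 4 * (T ^ 2 * (αL - α0) ^ 2 * S3) / (((M:ℝ) + 1) * ((L:ℝ) + 1)) := by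
            ring
          rw [e1, e2, div_le_div_iff₀ (by positivity) (by positivity)]
          have hTd : 0 ≤ T ^ 2 * (αL - α0) ^ 2 * S3 := by positivity
          have h4 : ((M:ℝ) + 1) * ((L:ℝ) + 1) ≤ 4 * ((M:ℝ) * L) := by nlinarith
          nlinarith [mul_le_mul_of_nonneg_left h4 hTd]
  -- combine
  set Cmax := max 1 (max (2 * T ^ 2) (4 * T ^ 2 * (αL - α0) ^ 2)) with hCmax
  have hC1 : (1:ℝ) ≤ Cmax := le_max_left _ _
  have hC2 : 2 * T ^ 2 ≤ Cmax := le_trans (le_max_left _ _) (le_max_right _ _)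
  have hC3 : 4 * T ^ 2 * (αL - α0) ^ 2 ≤ Cmax := le_trans (le_max_right _ _) (le_max_right _ _)
  have hmain := norm_add3_sq (Q (u 0 l)) (Δt l • (∑ i ∈ Finset.Icc 1 j, Q (Dt i 0)))
    ((Δt l * Δα) • (∑ i ∈ Finset.Icc 1 j, ∑ k ∈ Finset.Icc 1 l, Q (DtDa i k)))
  rw [← hu_decomp] at hmain
  have ht1 : ‖Q (u 0 l)‖ ^ 2 ≤ Cmax * S1 :=
    hA.trans (le_mul_of_one_le_left hS1 hC1)
  have ht2 : ‖Δt l • (∑ i ∈ Finset.Icc 1 j, Q (Dt i 0))‖ ^ 2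
      ≤ Cmax * (1 / (M + 1 : ℝ) * S2) := by
    exact hB.trans (mul_le_mul_of_nonneg_right hC2 (mul_nonneg (by positivity) hS2))
  have ht3 : ‖(Δt l * Δα) • (∑ i ∈ Finset.Icc 1 j, ∑ k ∈ Finset.Icc 1 l, Q (DtDa i k))‖ ^ 2
      ≤ Cmax * (1 / ((M + 1) * (L + 1) : ℝ) * S3) := by
    exact hC.trans (mul_le_mul_of_nonneg_right hC3 (mul_nonneg (by positivity) hS3))
  have hΛ : Cmax * S1 + Cmax * (1 / (M + 1 : ℝ) * S2)
      + Cmax * (1 / ((M + 1) * (L + 1) : ℝ) * S3) = Cmax * Λ := by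
    rw [← hsum]; ring
  linarith [hmain, ht1, ht2, ht3, hΛ]
end

section
/- Let X be a normed space and z(t_j, α_l, β_k) ∈ X for 0 ≤ j ≤ M, 0 ≤ l ≤ L, 0 ≤ k ≤ S with uniform steps Δt, Δα, Δβ > 0. Then ‖z(t_j, α_l, β_k)‖² ≤ 4‖z(t_0, α_l, β_k)‖² + 4(jΔt) Σ_{s=1}^{j} Δt ‖D^t z(t_s, α_0, β_k)‖² + 4(jΔt)(lΔα) Σ_{s=1}^{j} Σ_{n=1}^{l} ΔαΔt ‖D^t D^α z(t_s, α_n, β_0)‖² + 4(jΔt)(lΔα)(kΔβ) Σ_{s=1}^{j} Σ_{n=1}^{l} Σ_{r=1}^{k} ΔβΔαΔt ‖D^t D^α D^β z(t_s, α_n, β_r)‖². -/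
/-- Norm of a sum squared bounded by card times sum of squared norms. -/
lemma norm_sum_sq_le_card_mul {X : Type*} [NormedAddCommGroup X] {ι : Type*}
    (s : Finset ι) (f : ι → X) :
    ‖∑ i ∈ s, f i‖ ^ 2 ≤ s.card * ∑ i ∈ s, ‖f i‖ ^ 2 := by
  calc ‖∑ i ∈ s, f i‖ ^ 2 ≤ (∑ i ∈ s, ‖f i‖) ^ 2 := by
        apply pow_le_pow_left₀ (norm_nonneg _) (norm_sum_le _ _)
    _ ≤ s.card * ∑ i ∈ s, ‖f i‖ ^ 2 := sq_sum_le_card_mul_sum_sq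

lemma norm_add_four_sq_le {X : Type*} [NormedAddCommGroup X] (a b c d : X) :
    ‖a + b + c + d‖ ^ 2 ≤ 4 * ‖a‖ ^ 2 + 4 * ‖b‖ ^ 2 + 4 * ‖c‖ ^ 2 + 4 * ‖d‖ ^ 2 := by
  have h : ‖a + b + c + d‖ ≤ ‖a‖ + ‖b‖ + ‖c‖ + ‖d‖ := by
    calc ‖a + b + c + d‖ ≤ ‖a + b + c‖ + ‖d‖ := norm_add_le _ _
      _ ≤ ‖a + b‖ + ‖c‖ + ‖d‖ := by gcongr; exact norm_add_le _ _
      _ ≤ ‖a‖ + ‖b‖ + ‖c‖ + ‖d‖ := by gcongr; exact norm_add_le _ _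
  nlinarith [norm_nonneg (a+b+c+d), norm_nonneg a, norm_nonneg b, norm_nonneg c,
    norm_nonneg d, sq_nonneg (‖a‖-‖b‖), sq_nonneg (‖a‖-‖c‖), sq_nonneg (‖a‖-‖d‖),
    sq_nonneg (‖b‖-‖c‖), sq_nonneg (‖b‖-‖d‖), sq_nonneg (‖c‖-‖d‖)]

/-- Telescoping: f m = f 0 + ∑_{i=1}^m (f i - f (i-1)). -/
lemma telescope {X : Type*} [AddCommGroup X] (f : ℕ → X) (m : ℕ) :
    f m = f 0 + ∑ i ∈ Finset.Icc 1 m, (f i - f (i - 1)) := by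
  induction m with
  | zero => simp
  | succ m ih =>
      rw [Finset.sum_Icc_succ_top (by omega), ← add_assoc, ← ih]
      simp

/-- Lemma 7 of the paper: pointwise bound for a triply-indexed family by initial
values and first, second and third order backward difference quotients. -/
theorem pointwise_bound_three_indices
    {X : Type*} [NormedAddCommGroup X] [NormedSpace ℝ X]
    (M L S : ℕ) (z : ℕ → ℕ → ℕ → X) (Δt Δα Δβ : ℝ)
    (hΔt : 0 < Δt) (hΔα : 0 < Δα) (hΔβ : 0 < Δβ)
    (Dt : ℕ → ℕ → ℕ → X)
    (hDt : ∀ s n r, Dt s n r = Δt⁻¹ • (z s n r - z (s - 1) n r))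
    (DtDa : ℕ → ℕ → ℕ → X)
    (hDtDa : ∀ s n r, DtDa s n r = Δα⁻¹ • (Dt s n r - Dt s (n - 1) r))
    (DtDaDb : ℕ → ℕ → ℕ → X)
    (hDtDaDb : ∀ s n r, DtDaDb s n r = Δβ⁻¹ • (DtDa s n r - DtDa s n (r - 1)))
    (j : ℕ) (hj : j ≤ M) (l : ℕ) (hl : l ≤ L) (k : ℕ) (hk : k ≤ S) :
    ‖z j l k‖ ^ 2 ≤
      4 * ‖z 0 l k‖ ^ 2
      + 4 * (j * Δt) * ∑ s ∈ Finset.Icc 1 j, Δt * ‖Dt s 0 k‖ ^ 2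
      + 4 * (j * Δt) * (l * Δα) *
          ∑ s ∈ Finset.Icc 1 j, ∑ n ∈ Finset.Icc 1 l, Δα * Δt * ‖DtDa s n 0‖ ^ 2
      + 4 * (j * Δt) * (l * Δα) * (k * Δβ) *
          ∑ s ∈ Finset.Icc 1 j, ∑ n ∈ Finset.Icc 1 l, ∑ r ∈ Finset.Icc 1 k,
            Δβ * Δα * Δt * ‖DtDaDb s n r‖ ^ 2 := by
  have hΔt' : Δt ≠ 0 := ne_of_gt hΔt
  have hΔα' : Δα ≠ 0 := ne_of_gt hΔα
  have hΔβ' : Δβ ≠ 0 := ne_of_gt hΔβ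
  have hz : ∀ s n r, z s n r - z (s-1) n r = Δt • Dt s n r := by
    intro s n r; rw [hDt, smul_inv_smul₀ hΔt']
  have hDtd : ∀ s n r, Dt s n r - Dt s (n-1) r = Δα • DtDa s n r := by
    intro s n r; rw [hDtDa, smul_inv_smul₀ hΔα']
  have hDaD : ∀ s n r, DtDa s n r - DtDa s n (r-1) = Δβ • DtDaDb s n r := by
    intro s n r; rw [hDtDaDb, smul_inv_smul₀ hΔβ']
  have hDtDa' : ∀ s n, DtDa s n k =
      DtDa s n 0 + ∑ r ∈ Finset.Icc 1 k, Δβ • DtDaDb s n r := by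
    intro s n
    have := telescope (fun r => DtDa s n r) k
    simpa [hDaD] using this
  have hDt' : ∀ s, Dt s l k =
      Dt s 0 k + ∑ n ∈ Finset.Icc 1 l, Δα • DtDa s n k := by
    intro s
    have := telescope (fun n => Dt s n k) l
    simpa [hDtd] using this
  have hz' : z j l k = z 0 l k + ∑ s ∈ Finset.Icc 1 j, Δt • Dt s l k := by
    have := telescope (fun s => z s l k) j
    simpa [hz] using this
  set B : X := ∑ s ∈ Finset.Icc 1 j, Δt • Dt s 0 k with hB
  set C : X := ∑ s ∈ Finset.Icc 1 j, ∑ n ∈ Finset.Icc 1 l, (Δα * Δt) • DtDa s n 0 with hC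
  set D : X := ∑ s ∈ Finset.Icc 1 j, ∑ n ∈ Finset.Icc 1 l, ∑ r ∈ Finset.Icc 1 k,
      (Δβ * Δα * Δt) • DtDaDb s n r with hD
  have hdec : z j l k = z 0 l k + B + C + D := by
    rw [hz']
    have key : ∀ s ∈ Finset.Icc 1 j, Δt • Dt s l k =
        Δt • Dt s 0 k + ((∑ n ∈ Finset.Icc 1 l, (Δα * Δt) • DtDa s n 0)
          + ∑ n ∈ Finset.Icc 1 l, ∑ r ∈ Finset.Icc 1 k, (Δβ * Δα * Δt) • DtDaDb s n r) := by
      intro s _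
      have inner : ∀ n ∈ Finset.Icc 1 l, Δt • (Δα • DtDa s n k) =
          (Δα * Δt) • DtDa s n 0 + ∑ r ∈ Finset.Icc 1 k, (Δβ * Δα * Δt) • DtDaDb s n r := by
        intro n _
        rw [hDtDa' s n, smul_add, smul_add, Finset.smul_sum, Finset.smul_sum]
        congr 1
        · rw [smul_smul, mul_comm Δt Δα]
        · apply Finset.sum_congr rfl; intro r _
          simp only [smul_smul]; congr 1; ring
      rw [hDt' s, smul_add, Finset.smul_sum]
      congr 1
      rw [Finset.sum_congr rfl inner, Finset.sum_add_distrib]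
    rw [Finset.sum_congr rfl key, Finset.sum_add_distrib, Finset.sum_add_distrib]
    rw [hB, hC, hD]; abel
  have cardj : ((Finset.Icc 1 j).card : ℝ) = j := by simp
  have cardl : ((Finset.Icc 1 l).card : ℝ) = l := by simp
  have cardk : ((Finset.Icc 1 k).card : ℝ) = k := by simp
  have hBbd : ‖B‖ ^ 2 ≤ (j * Δt) * ∑ s ∈ Finset.Icc 1 j, Δt * ‖Dt s 0 k‖ ^ 2 := by
    calc ‖B‖ ^ 2 ≤ (Finset.Icc 1 j).card * ∑ s ∈ Finset.Icc 1 j, ‖Δt • Dt s 0 k‖ ^ 2 :=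
          norm_sum_sq_le_card_mul _ _
      _ = (j * Δt) * ∑ s ∈ Finset.Icc 1 j, Δt * ‖Dt s 0 k‖ ^ 2 := by
          rw [cardj, Finset.mul_sum, Finset.mul_sum]
          apply Finset.sum_congr rfl; intro s _
          rw [norm_smul, mul_pow, Real.norm_eq_abs, sq_abs]; ring
  have hCbd : ‖C‖ ^ 2 ≤ (j * Δt) * (l * Δα) *
      ∑ s ∈ Finset.Icc 1 j, ∑ n ∈ Finset.Icc 1 l, Δα * Δt * ‖DtDa s n 0‖ ^ 2 := by
    have hflat : C = ∑ p ∈ Finset.Icc 1 j ×ˢ Finset.Icc 1 l, (Δα * Δt) • DtDa p.1 p.2 0 := by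
      rw [Finset.sum_product]
    calc ‖C‖ ^ 2 ≤ (Finset.Icc 1 j ×ˢ Finset.Icc 1 l).card *
          ∑ p ∈ Finset.Icc 1 j ×ˢ Finset.Icc 1 l, ‖(Δα * Δt) • DtDa p.1 p.2 0‖ ^ 2 := by
          rw [hflat]; exact norm_sum_sq_le_card_mul _ _
      _ = (j * Δt) * (l * Δα) *
          ∑ s ∈ Finset.Icc 1 j, ∑ n ∈ Finset.Icc 1 l, Δα * Δt * ‖DtDa s n 0‖ ^ 2 := by
          rw [Finset.sum_product, Finset.card_product]
          push_cast
          rw [cardj, cardl, Finset.mul_sum, Finset.mul_sum]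
          apply Finset.sum_congr rfl; intro s _
          rw [Finset.mul_sum, Finset.mul_sum]
          apply Finset.sum_congr rfl; intro n _
          rw [norm_smul, mul_pow, Real.norm_eq_abs, sq_abs]; ring
  have hDbd : ‖D‖ ^ 2 ≤ (j * Δt) * (l * Δα) * (k * Δβ) *
      ∑ s ∈ Finset.Icc 1 j, ∑ n ∈ Finset.Icc 1 l, ∑ r ∈ Finset.Icc 1 k,
        Δβ * Δα * Δt * ‖DtDaDb s n r‖ ^ 2 := by
    have hflat : D = ∑ p ∈ (Finset.Icc 1 j ×ˢ Finset.Icc 1 l) ×ˢ Finset.Icc 1 k,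
        (Δβ * Δα * Δt) • DtDaDb p.1.1 p.1.2 p.2 := by
      rw [Finset.sum_product, Finset.sum_product]
    calc ‖D‖ ^ 2 ≤ ((Finset.Icc 1 j ×ˢ Finset.Icc 1 l) ×ˢ Finset.Icc 1 k).card *
          ∑ p ∈ (Finset.Icc 1 j ×ˢ Finset.Icc 1 l) ×ˢ Finset.Icc 1 k,
            ‖(Δβ * Δα * Δt) • DtDaDb p.1.1 p.1.2 p.2‖ ^ 2 := by
          rw [hflat]; exact norm_sum_sq_le_card_mul _ _
      _ = (j * Δt) * (l * Δα) * (k * Δβ) *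
          ∑ s ∈ Finset.Icc 1 j, ∑ n ∈ Finset.Icc 1 l, ∑ r ∈ Finset.Icc 1 k,
            Δβ * Δα * Δt * ‖DtDaDb s n r‖ ^ 2 := by
          rw [Finset.sum_product, Finset.sum_product, Finset.card_product,
            Finset.card_product]
          push_cast
          rw [cardj, cardl, cardk, Finset.mul_sum, Finset.mul_sum]
          apply Finset.sum_congr rfl; intro s _
          rw [Finset.mul_sum, Finset.mul_sum]
          apply Finset.sum_congr rfl; intro n _
          rw [Finset.mul_sum, Finset.mul_sum]
          apply Finset.sum_congr rfl; intro r _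
          rw [norm_smul, mul_pow, Real.norm_eq_abs, sq_abs]; ring
  calc ‖z j l k‖ ^ 2 = ‖z 0 l k + B + C + D‖ ^ 2 := by rw [hdec]
    _ ≤ 4 * ‖z 0 l k‖ ^ 2 + 4 * ‖B‖ ^ 2 + 4 * ‖C‖ ^ 2 + 4 * ‖D‖ ^ 2 :=
        norm_add_four_sq_le _ _ _ _
    _ ≤ _ := by linarith [hBbd, hCbd, hDbd]
end

section
/- Let H be a real Hilbert space, P : H → H an orthogonal projection, and u(t_j, α_l, β_k) ∈ H for 0 ≤ j ≤ M, 0 ≤ l ≤ L, 0 ≤ k ≤ S, with L, M, S ≥ 1, steps Δt = T/M, Δα = (α_L-α_0)/L, Δβ = (β_S-β_0)/S, and N = (M+1)(L+1)(S+1). Suppose Σ_{l,k} ‖(I-P)u(t_0,α_l,β_k)‖² + (1/(M+1)) Σ_{j=1}^{M} Σ_{k=0}^{S} ‖(I-P)D^t u(t_j,α_0,β_k)‖² + (1/((M+1)(L+1))) Σ_{j=1}^{M} Σ_{l=1}^{L} ‖(I-P)D^t D^α u(t_j,α_l,β_0)‖² + (1/N) Σ_{j,l,k≥1} ‖(I-P)D^t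 D^α D^β u(t_j,α_l,β_k)‖² = Λ. Then max_{j,l,k} ‖(I-P)u(t_j,α_l,β_k)‖² ≤ C Λ with C = 4 max(1, 2T², 4T²(α_L-α_0)², 8T²(α_L-α_0)²(β_S-β_0)²). -/
open scoped RealInnerProductSpace

private lemma tele_aux {H : Type*} [AddCommGroup H] (g : ℕ → H) (j : ℕ) :
    ∑ i ∈ Finset.Icc 1 j, (g i - g (i - 1)) = g j - g 0 := by
  induction j with
  | zero => simp
  | succ n ih =>
    rw [Finset.sum_Icc_succ_top (by omega), ih]
    simp only [Nat.add_sub_cancel]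
    abel

private lemma cs_sum_aux {H : Type*} [SeminormedAddCommGroup H] {ι : Type*}
    (s : Finset ι) (v : ι → H) :
    ‖∑ i ∈ s, v i‖ ^ 2 ≤ (s.card : ℝ) * ∑ i ∈ s, ‖v i‖ ^ 2 := by
  calc ‖∑ i ∈ s, v i‖ ^ 2 ≤ (∑ i ∈ s, ‖v i‖) ^ 2 :=
        pow_le_pow_left₀ (norm_nonneg _) (norm_sum_le _ _) 2
    _ ≤ (s.card : ℝ) * ∑ i ∈ s, ‖v i‖ ^ 2 := by
        have := sq_sum_le_card_mul_sum_sq (s := s) (f := fun i => ‖v i‖)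
        push_cast at this ⊢
        convert this using 2

private lemma four_sq_aux (x y z w : ℝ) :
    (x + y + z + w) ^ 2 ≤ 4 * (x ^ 2 + y ^ 2 + z ^ 2 + w ^ 2) := by
  nlinarith [sq_nonneg (x - y), sq_nonneg (x - z), sq_nonneg (x - w),
    sq_nonneg (y - z), sq_nonneg (y - w), sq_nonneg (z - w)]

private lemma inv_coeff_aux {c x y : ℝ} (hx : 0 < x) (hy : 0 < y) (h : y ≤ c * x) :
    x⁻¹ ≤ c * y⁻¹ := by
  rw [inv_eq_one_div, inv_eq_one_div, mul_one_div, div_le_div_iff₀ hx hy]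
  linarith

/-- Lemma 8 of the paper: pointwise projection-error bound in the
three-parameter (time plus two parameters) POD setting. -/
theorem pointwise_projection_bound_two_parameters
    {H : Type*} [NormedAddCommGroup H] [InnerProductSpace ℝ H]
    (P : H →ₗ[ℝ] H)
    (hPidem : ∀ x, P (P x) = P x)
    (hPsa : ∀ x y : H, ⟪P x, y⟫ = ⟪x, P y⟫)
    (M L S : ℕ) (hM : 1 ≤ M) (hL : 1 ≤ L) (hS : 1 ≤ S)
    (u : ℕ → ℕ → ℕ → H) (T α0 αL β0 βS : ℝ)
    (hT : 0 < T) (hα : α0 < αL) (hβ : β0 < βS)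
    (Δt Δα Δβ : ℝ) (hΔt : Δt = T / M) (hΔα : Δα = (αL - α0) / L)
    (hΔβ : Δβ = (βS - β0) / S)
    (Dt : ℕ → ℕ → ℕ → H)
    (hDt : ∀ j l k, Dt j l k = Δt⁻¹ • (u j l k - u (j - 1) l k))
    (DtDa : ℕ → ℕ → ℕ → H)
    (hDtDa : ∀ j l k, DtDa j l k = Δα⁻¹ • (Dt j l k - Dt j (l - 1) k))
    (DtDaDb : ℕ → ℕ → ℕ → H)
    (hDtDaDb : ∀ j l k, DtDaDb j l k = Δβ⁻¹ • (DtDa j l k - DtDa j l (k - 1)))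
    (Λ : ℝ)
    (hsum :
      (∑ l ∈ Finset.range (L + 1), ∑ k ∈ Finset.range (S + 1),
          ‖u 0 l k - P (u 0 l k)‖ ^ 2)
      + (1 / (M + 1 : ℝ)) * ∑ j ∈ Finset.Icc 1 M, ∑ k ∈ Finset.range (S + 1),
          ‖Dt j 0 k - P (Dt j 0 k)‖ ^ 2
      + (1 / ((M + 1) * (L + 1) : ℝ)) *
          ∑ j ∈ Finset.Icc 1 M, ∑ l ∈ Finset.Icc 1 L,
            ‖DtDa j l 0 - P (DtDa j l 0)‖ ^ 2
      + (1 / ((M + 1) * (L + 1) * (S + 1) : ℝ)) *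
          ∑ j ∈ Finset.Icc 1 M, ∑ l ∈ Finset.Icc 1 L, ∑ k ∈ Finset.Icc 1 S,
            ‖DtDaDb j l k - P (DtDaDb j l k)‖ ^ 2
        = Λ) :
    ∀ j ≤ M, ∀ l ≤ L, ∀ k ≤ S,
      ‖u j l k - P (u j l k)‖ ^ 2 ≤
        4 * max 1 (max (2 * T ^ 2) (max (4 * T ^ 2 * (αL - α0) ^ 2)
            (8 * T ^ 2 * (αL - α0) ^ 2 * (βS - β0) ^ 2))) * Λ := by
  intro j hj l hl k hk
  have hMR : (1 : ℝ) ≤ M := by exact_mod_cast hM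
  have hLR : (1 : ℝ) ≤ L := by exact_mod_cast hL
  have hSR : (1 : ℝ) ≤ S := by exact_mod_cast hS
  have hΔtpos : 0 < Δt := by rw [hΔt]; exact div_pos hT (by linarith)
  have hΔαpos : 0 < Δα := by rw [hΔα]; exact div_pos (by linarith) (by linarith)
  have hΔβpos : 0 < Δβ := by rw [hΔβ]; exact div_pos (by linarith) (by linarith)
  have hΔt0 : Δt ≠ 0 := ne_of_gt hΔtpos
  have hΔα0 : Δα ≠ 0 := ne_of_gt hΔαpos
  have hΔβ0 : Δβ ≠ 0 := ne_of_gt hΔβpos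
  -- telescoping identities
  have idu : ∀ j l k, u j l k = u 0 l k + Δt • ∑ j' ∈ Finset.Icc 1 j, Dt j' l k := by
    intro j l k
    have h2 : ∀ j', Δt • Dt j' l k = u j' l k - u (j' - 1) l k := by
      intro j'; rw [hDt, smul_smul, mul_inv_cancel₀ hΔt0, one_smul]
    rw [Finset.smul_sum]
    simp_rw [h2]
    rw [tele_aux (fun i => u i l k) j]
    abel
  have idDt : ∀ j l k, Dt j l k = Dt j 0 k + Δα • ∑ l' ∈ Finset.Icc 1 l, DtDa j l' k := by
    intro j l k
    have h2 : ∀ l', Δα • DtDa j l' k = Dt j l' k - Dt j (l' - 1) k := by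
      intro l'; rw [hDtDa, smul_smul, mul_inv_cancel₀ hΔα0, one_smul]
    rw [Finset.smul_sum]
    simp_rw [h2]
    rw [tele_aux (fun i => Dt j i k) l]
    abel
  have idDa : ∀ j l k, DtDa j l k = DtDa j l 0 + Δβ • ∑ k' ∈ Finset.Icc 1 k, DtDaDb j l k' := by
    intro j l k
    have h2 : ∀ k', Δβ • DtDaDb j l k' = DtDa j l k' - DtDa j l (k' - 1) := by
      intro k'; rw [hDtDaDb, smul_smul, mul_inv_cancel₀ hΔβ0, one_smul]
    rw [Finset.smul_sum]
    simp_rw [h2]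
    rw [tele_aux (fun i => DtDa j l i) k]
    abel
  have key : u j l k = u 0 l k
      + Δt • (∑ j' ∈ Finset.Icc 1 j, Dt j' 0 k)
      + (Δt * Δα) • (∑ j' ∈ Finset.Icc 1 j, ∑ l' ∈ Finset.Icc 1 l, DtDa j' l' 0)
      + (Δt * Δα * Δβ) • (∑ j' ∈ Finset.Icc 1 j, ∑ l' ∈ Finset.Icc 1 l,
          ∑ k' ∈ Finset.Icc 1 k, DtDaDb j' l' k') := by
    rw [idu j l k]
    have hcong : ∀ j' ∈ Finset.Icc 1 j, Dt j' l k
        = Dt j' 0 k + Δα • ∑ l' ∈ Finset.Icc 1 l,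
            (DtDa j' l' 0 + Δβ • ∑ k' ∈ Finset.Icc 1 k, DtDaDb j' l' k') := by
      intro j' _
      rw [idDt j' l k]
      congr 1
      congr 1
      exact Finset.sum_congr rfl fun l' _ => idDa j' l' k
    rw [Finset.sum_congr rfl hcong]
    simp only [Finset.sum_add_distrib, Finset.smul_sum, smul_add, smul_smul, mul_assoc]
    abel
  have keyE : u j l k - P (u j l k) = (u 0 l k - P (u 0 l k))
      + Δt • (∑ j' ∈ Finset.Icc 1 j, (Dt j' 0 k - P (Dt j' 0 k)))
      + (Δt * Δα) • (∑ j' ∈ Finset.Icc 1 j, ∑ l' ∈ Finset.Icc 1 l,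
          (DtDa j' l' 0 - P (DtDa j' l' 0)))
      + (Δt * Δα * Δβ) • (∑ j' ∈ Finset.Icc 1 j, ∑ l' ∈ Finset.Icc 1 l,
          ∑ k' ∈ Finset.Icc 1 k, (DtDaDb j' l' k' - P (DtDaDb j' l' k'))) := by
    have h := congrArg (fun x => (LinearMap.id - P : H →ₗ[ℝ] H) x) key
    simpa only [map_add, map_smul, map_sum, LinearMap.sub_apply, LinearMap.id_apply] using h
  -- the four Λ summands
  set t1 := ∑ l ∈ Finset.range (L + 1), ∑ k ∈ Finset.range (S + 1),
      ‖u 0 l k - P (u 0 l k)‖ ^ 2 with ht1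
  set t2 := ∑ j ∈ Finset.Icc 1 M, ∑ k ∈ Finset.range (S + 1),
      ‖Dt j 0 k - P (Dt j 0 k)‖ ^ 2 with ht2
  set t3 := ∑ j ∈ Finset.Icc 1 M, ∑ l ∈ Finset.Icc 1 L,
      ‖DtDa j l 0 - P (DtDa j l 0)‖ ^ 2 with ht3
  set t4 := ∑ j ∈ Finset.Icc 1 M, ∑ l ∈ Finset.Icc 1 L, ∑ k ∈ Finset.Icc 1 S,
      ‖DtDaDb j l k - P (DtDaDb j l k)‖ ^ 2 with ht4
  have ht1n : 0 ≤ t1 := Finset.sum_nonneg fun _ _ =>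
    Finset.sum_nonneg fun _ _ => pow_nonneg (norm_nonneg _) 2
  have ht2n : 0 ≤ t2 := Finset.sum_nonneg fun _ _ =>
    Finset.sum_nonneg fun _ _ => pow_nonneg (norm_nonneg _) 2
  have ht3n : 0 ≤ t3 := Finset.sum_nonneg fun _ _ =>
    Finset.sum_nonneg fun _ _ => pow_nonneg (norm_nonneg _) 2
  have ht4n : 0 ≤ t4 := Finset.sum_nonneg fun _ _ =>
    Finset.sum_nonneg fun _ _ => Finset.sum_nonneg fun _ _ => pow_nonneg (norm_nonneg _) 2
  set a := u 0 l k - P (u 0 l k) with ha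
  set b := Δt • (∑ j' ∈ Finset.Icc 1 j, (Dt j' 0 k - P (Dt j' 0 k))) with hb
  set c := (Δt * Δα) • (∑ j' ∈ Finset.Icc 1 j, ∑ l' ∈ Finset.Icc 1 l,
      (DtDa j' l' 0 - P (DtDa j' l' 0))) with hc
  set d := (Δt * Δα * Δβ) • (∑ j' ∈ Finset.Icc 1 j, ∑ l' ∈ Finset.Icc 1 l,
      ∑ k' ∈ Finset.Icc 1 k, (DtDaDb j' l' k' - P (DtDaDb j' l' k'))) with hd
  -- ‖a‖² ≤ t1
  have hA : ‖a‖ ^ 2 ≤ t1 := by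
    have h1 : ‖a‖ ^ 2 ≤ ∑ k' ∈ Finset.range (S + 1), ‖u 0 l k' - P (u 0 l k')‖ ^ 2 :=
      Finset.single_le_sum (f := fun k' => ‖u 0 l k' - P (u 0 l k')‖ ^ 2)
        (fun i _ => pow_nonneg (norm_nonneg _) 2) (Finset.mem_range.mpr (by omega))
    refine h1.trans ?_
    exact Finset.single_le_sum
      (f := fun l' => ∑ k' ∈ Finset.range (S + 1), ‖u 0 l' k' - P (u 0 l' k')‖ ^ 2)
      (fun i _ => Finset.sum_nonneg fun _ _ => pow_nonneg (norm_nonneg _) 2) (Finset.mem_range.mpr (by omega))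
  -- ‖b‖² ≤ Δt² * M * t2
  have hsum2 : ∑ j' ∈ Finset.Icc 1 j, ‖Dt j' 0 k - P (Dt j' 0 k)‖ ^ 2 ≤ t2 := by
    calc ∑ j' ∈ Finset.Icc 1 j, ‖Dt j' 0 k - P (Dt j' 0 k)‖ ^ 2
        ≤ ∑ j' ∈ Finset.Icc 1 j, ∑ k' ∈ Finset.range (S + 1),
            ‖Dt j' 0 k' - P (Dt j' 0 k')‖ ^ 2 :=
          Finset.sum_le_sum fun i _ =>
            Finset.single_le_sum (f := fun k' => ‖Dt i 0 k' - P (Dt i 0 k')‖ ^ 2)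
              (fun i' _ => pow_nonneg (norm_nonneg _) 2) (Finset.mem_range.mpr (by omega))
      _ ≤ t2 := Finset.sum_le_sum_of_subset_of_nonneg
            (Finset.Icc_subset_Icc_right hj) (fun i _ _ => Finset.sum_nonneg fun _ _ => pow_nonneg (norm_nonneg _) 2)
  have cardj : ((Finset.Icc 1 j).card : ℝ) ≤ (M : ℝ) := by
    rw [Nat.card_Icc]; exact_mod_cast (by omega : j + 1 - 1 ≤ M)
  have cardl : ((Finset.Icc 1 l).card : ℝ) ≤ (L : ℝ) := by
    rw [Nat.card_Icc]; exact_mod_cast (by omega : l + 1 - 1 ≤ L)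
  have cardk : ((Finset.Icc 1 k).card : ℝ) ≤ (S : ℝ) := by
    rw [Nat.card_Icc]; exact_mod_cast (by omega : k + 1 - 1 ≤ S)
  have hMpos : (0 : ℝ) < M := by linarith
  have hLpos : (0 : ℝ) < L := by linarith
  have hSpos : (0 : ℝ) < S := by linarith
  have hM2 : ((M : ℝ) + 1) ≤ 2 * (M : ℝ) := by linarith
  have hL2 : ((L : ℝ) + 1) ≤ 2 * (L : ℝ) := by linarith
  have hS2 : ((S : ℝ) + 1) ≤ 2 * (S : ℝ) := by linarith
  have hprod2 : ((M : ℝ) + 1) * ((L : ℝ) + 1) ≤ 4 * ((M : ℝ) * (L : ℝ)) := by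
    calc ((M : ℝ) + 1) * ((L : ℝ) + 1) ≤ (2 * (M : ℝ)) * (2 * (L : ℝ)) :=
          mul_le_mul hM2 hL2 (by linarith) (by linarith)
      _ = 4 * ((M : ℝ) * (L : ℝ)) := by ring
  have hprod3 : ((M : ℝ) + 1) * ((L : ℝ) + 1) * ((S : ℝ) + 1)
      ≤ 8 * ((M : ℝ) * (L : ℝ) * (S : ℝ)) := by
    calc ((M : ℝ) + 1) * ((L : ℝ) + 1) * ((S : ℝ) + 1)
        ≤ (4 * ((M : ℝ) * (L : ℝ))) * (2 * (S : ℝ)) :=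
          mul_le_mul hprod2 hS2 (by linarith) (by positivity)
      _ = 8 * ((M : ℝ) * (L : ℝ) * (S : ℝ)) := by ring
  -- bound for b
  have hB : ‖b‖ ^ 2 ≤ 2 * T ^ 2 * (1 / ((M : ℝ) + 1) * t2) := by
    have h3 : ‖∑ j' ∈ Finset.Icc 1 j, (Dt j' 0 k - P (Dt j' 0 k))‖ ^ 2 ≤ (M : ℝ) * t2 :=
      (cs_sum_aux _ _).trans
        (mul_le_mul cardj hsum2
          (Finset.sum_nonneg fun _ _ => pow_nonneg (norm_nonneg _) 2) (by linarith))
    have e1 : Δt ^ 2 * ((M : ℝ) * t2) = (T ^ 2 * t2) * ((M : ℝ))⁻¹ := by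
      rw [hΔt]; field_simp
    have h4 : ((M : ℝ))⁻¹ ≤ 2 * ((M : ℝ) + 1)⁻¹ :=
      inv_coeff_aux hMpos (by linarith) (by linarith)
    calc ‖b‖ ^ 2 = Δt ^ 2 * ‖∑ j' ∈ Finset.Icc 1 j, (Dt j' 0 k - P (Dt j' 0 k))‖ ^ 2 := by
          rw [hb, norm_smul, mul_pow, Real.norm_eq_abs, sq_abs]
      _ ≤ Δt ^ 2 * ((M : ℝ) * t2) := mul_le_mul_of_nonneg_left h3 (sq_nonneg _)
      _ = (T ^ 2 * t2) * ((M : ℝ))⁻¹ := e1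
      _ ≤ (T ^ 2 * t2) * (2 * ((M : ℝ) + 1)⁻¹) :=
          mul_le_mul_of_nonneg_left h4 (mul_nonneg (sq_nonneg T) ht2n)
      _ = 2 * T ^ 2 * (1 / ((M : ℝ) + 1) * t2) := by ring
  -- bound for c
  have hsum3 : ∑ j' ∈ Finset.Icc 1 j, ∑ l' ∈ Finset.Icc 1 l,
      ‖DtDa j' l' 0 - P (DtDa j' l' 0)‖ ^ 2 ≤ t3 := by
    calc ∑ j' ∈ Finset.Icc 1 j, ∑ l' ∈ Finset.Icc 1 l,
          ‖DtDa j' l' 0 - P (DtDa j' l' 0)‖ ^ 2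
        ≤ ∑ j' ∈ Finset.Icc 1 j, ∑ l' ∈ Finset.Icc 1 L,
            ‖DtDa j' l' 0 - P (DtDa j' l' 0)‖ ^ 2 :=
          Finset.sum_le_sum fun i _ => Finset.sum_le_sum_of_subset_of_nonneg
            (Finset.Icc_subset_Icc_right hl) (fun _ _ _ => pow_nonneg (norm_nonneg _) 2)
      _ ≤ t3 := Finset.sum_le_sum_of_subset_of_nonneg
            (Finset.Icc_subset_Icc_right hj)
            (fun _ _ _ => Finset.sum_nonneg fun _ _ => pow_nonneg (norm_nonneg _) 2)
  have hC : ‖c‖ ^ 2 ≤ 4 * T ^ 2 * (αL - α0) ^ 2 *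
      (1 / (((M : ℝ) + 1) * ((L : ℝ) + 1)) * t3) := by
    have h3 : ‖∑ j' ∈ Finset.Icc 1 j, ∑ l' ∈ Finset.Icc 1 l,
        (DtDa j' l' 0 - P (DtDa j' l' 0))‖ ^ 2 ≤ ((M : ℝ) * (L : ℝ)) * t3 := by
      calc ‖∑ j' ∈ Finset.Icc 1 j, ∑ l' ∈ Finset.Icc 1 l,
            (DtDa j' l' 0 - P (DtDa j' l' 0))‖ ^ 2
          ≤ ((Finset.Icc 1 j).card : ℝ) * ∑ j' ∈ Finset.Icc 1 j,
              ‖∑ l' ∈ Finset.Icc 1 l, (DtDa j' l' 0 - P (DtDa j' l' 0))‖ ^ 2 :=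
            cs_sum_aux _ _
        _ ≤ ((Finset.Icc 1 j).card : ℝ) * ∑ j' ∈ Finset.Icc 1 j,
              (((Finset.Icc 1 l).card : ℝ) * ∑ l' ∈ Finset.Icc 1 l,
                ‖DtDa j' l' 0 - P (DtDa j' l' 0)‖ ^ 2) :=
            mul_le_mul_of_nonneg_left
              (Finset.sum_le_sum fun i _ => cs_sum_aux _ _) (Nat.cast_nonneg _)
        _ = (((Finset.Icc 1 j).card : ℝ) * ((Finset.Icc 1 l).card : ℝ)) *
              ∑ j' ∈ Finset.Icc 1 j, ∑ l' ∈ Finset.Icc 1 l,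
                ‖DtDa j' l' 0 - P (DtDa j' l' 0)‖ ^ 2 := by
            rw [← Finset.mul_sum]; ring
        _ ≤ ((M : ℝ) * (L : ℝ)) * t3 :=
            mul_le_mul (mul_le_mul cardj cardl (Nat.cast_nonneg _) (by linarith)) hsum3
              (Finset.sum_nonneg fun _ _ =>
                Finset.sum_nonneg fun _ _ => pow_nonneg (norm_nonneg _) 2)
              (mul_nonneg hMpos.le hLpos.le)
    have e1 : (Δt * Δα) ^ 2 * (((M : ℝ) * (L : ℝ)) * t3)
        = (T ^ 2 * (αL - α0) ^ 2 * t3) * ((M : ℝ) * (L : ℝ))⁻¹ := by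
      rw [hΔt, hΔα]; field_simp
    have h4 : ((M : ℝ) * (L : ℝ))⁻¹ ≤ 4 * (((M : ℝ) + 1) * ((L : ℝ) + 1))⁻¹ :=
      inv_coeff_aux (by positivity) (by positivity) hprod2
    calc ‖c‖ ^ 2 = (Δt * Δα) ^ 2 * ‖∑ j' ∈ Finset.Icc 1 j, ∑ l' ∈ Finset.Icc 1 l,
          (DtDa j' l' 0 - P (DtDa j' l' 0))‖ ^ 2 := by
          rw [hc, norm_smul, mul_pow, Real.norm_eq_abs, sq_abs]
      _ ≤ (Δt * Δα) ^ 2 * (((M : ℝ) * (L : ℝ)) * t3) :=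
          mul_le_mul_of_nonneg_left h3 (sq_nonneg _)
      _ = (T ^ 2 * (αL - α0) ^ 2 * t3) * ((M : ℝ) * (L : ℝ))⁻¹ := e1
      _ ≤ (T ^ 2 * (αL - α0) ^ 2 * t3) * (4 * (((M : ℝ) + 1) * ((L : ℝ) + 1))⁻¹) :=
          mul_le_mul_of_nonneg_left h4
            (mul_nonneg (mul_nonneg (sq_nonneg T) (sq_nonneg _)) ht3n)
      _ = 4 * T ^ 2 * (αL - α0) ^ 2 * (1 / (((M : ℝ) + 1) * ((L : ℝ) + 1)) * t3) := by ring
  -- bound for d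
  have hsum4 : ∑ j' ∈ Finset.Icc 1 j, ∑ l' ∈ Finset.Icc 1 l, ∑ k' ∈ Finset.Icc 1 k,
      ‖DtDaDb j' l' k' - P (DtDaDb j' l' k')‖ ^ 2 ≤ t4 := by
    calc ∑ j' ∈ Finset.Icc 1 j, ∑ l' ∈ Finset.Icc 1 l, ∑ k' ∈ Finset.Icc 1 k,
          ‖DtDaDb j' l' k' - P (DtDaDb j' l' k')‖ ^ 2
        ≤ ∑ j' ∈ Finset.Icc 1 j, ∑ l' ∈ Finset.Icc 1 l, ∑ k' ∈ Finset.Icc 1 S,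
            ‖DtDaDb j' l' k' - P (DtDaDb j' l' k')‖ ^ 2 :=
          Finset.sum_le_sum fun _ _ => Finset.sum_le_sum fun _ _ =>
            Finset.sum_le_sum_of_subset_of_nonneg (Finset.Icc_subset_Icc_right hk)
              (fun _ _ _ => pow_nonneg (norm_nonneg _) 2)
      _ ≤ ∑ j' ∈ Finset.Icc 1 j, ∑ l' ∈ Finset.Icc 1 L, ∑ k' ∈ Finset.Icc 1 S,
            ‖DtDaDb j' l' k' - P (DtDaDb j' l' k')‖ ^ 2 :=
          Finset.sum_le_sum fun _ _ => Finset.sum_le_sum_of_subset_of_nonneg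
            (Finset.Icc_subset_Icc_right hl)
            (fun _ _ _ => Finset.sum_nonneg fun _ _ => pow_nonneg (norm_nonneg _) 2)
      _ ≤ t4 := Finset.sum_le_sum_of_subset_of_nonneg
            (Finset.Icc_subset_Icc_right hj)
            (fun _ _ _ => Finset.sum_nonneg fun _ _ =>
              Finset.sum_nonneg fun _ _ => pow_nonneg (norm_nonneg _) 2)
  have hD : ‖d‖ ^ 2 ≤ 8 * T ^ 2 * (αL - α0) ^ 2 * (βS - β0) ^ 2 *
      (1 / (((M : ℝ) + 1) * ((L : ℝ) + 1) * ((S : ℝ) + 1)) * t4) := by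
    have h3 : ‖∑ j' ∈ Finset.Icc 1 j, ∑ l' ∈ Finset.Icc 1 l, ∑ k' ∈ Finset.Icc 1 k,
        (DtDaDb j' l' k' - P (DtDaDb j' l' k'))‖ ^ 2
        ≤ ((M : ℝ) * (L : ℝ) * (S : ℝ)) * t4 := by
      calc ‖∑ j' ∈ Finset.Icc 1 j, ∑ l' ∈ Finset.Icc 1 l, ∑ k' ∈ Finset.Icc 1 k,
            (DtDaDb j' l' k' - P (DtDaDb j' l' k'))‖ ^ 2
          ≤ ((Finset.Icc 1 j).card : ℝ) * ∑ j' ∈ Finset.Icc 1 j,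
              ‖∑ l' ∈ Finset.Icc 1 l, ∑ k' ∈ Finset.Icc 1 k,
                (DtDaDb j' l' k' - P (DtDaDb j' l' k'))‖ ^ 2 := cs_sum_aux _ _
        _ ≤ ((Finset.Icc 1 j).card : ℝ) * ∑ j' ∈ Finset.Icc 1 j,
              (((Finset.Icc 1 l).card : ℝ) * ∑ l' ∈ Finset.Icc 1 l,
                ‖∑ k' ∈ Finset.Icc 1 k, (DtDaDb j' l' k' - P (DtDaDb j' l' k'))‖ ^ 2) :=
            mul_le_mul_of_nonneg_left
              (Finset.sum_le_sum fun i _ => cs_sum_aux _ _) (Nat.cast_nonneg _)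
        _ ≤ ((Finset.Icc 1 j).card : ℝ) * ∑ j' ∈ Finset.Icc 1 j,
              (((Finset.Icc 1 l).card : ℝ) * ∑ l' ∈ Finset.Icc 1 l,
                (((Finset.Icc 1 k).card : ℝ) * ∑ k' ∈ Finset.Icc 1 k,
                  ‖DtDaDb j' l' k' - P (DtDaDb j' l' k')‖ ^ 2)) := by
            refine mul_le_mul_of_nonneg_left (Finset.sum_le_sum fun i _ => ?_)
              (Nat.cast_nonneg _)
            exact mul_le_mul_of_nonneg_left
              (Finset.sum_le_sum fun i' _ => cs_sum_aux _ _) (Nat.cast_nonneg _)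
        _ = (((Finset.Icc 1 j).card : ℝ) * ((Finset.Icc 1 l).card : ℝ) *
              ((Finset.Icc 1 k).card : ℝ)) *
              ∑ j' ∈ Finset.Icc 1 j, ∑ l' ∈ Finset.Icc 1 l, ∑ k' ∈ Finset.Icc 1 k,
                ‖DtDaDb j' l' k' - P (DtDaDb j' l' k')‖ ^ 2 := by
            simp_rw [← Finset.mul_sum]; ring
        _ ≤ ((M : ℝ) * (L : ℝ) * (S : ℝ)) * t4 := by
            refine mul_le_mul ?_ hsum4
              (Finset.sum_nonneg fun _ _ => Finset.sum_nonneg fun _ _ =>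
                Finset.sum_nonneg fun _ _ => pow_nonneg (norm_nonneg _) 2)
              (mul_nonneg (mul_nonneg hMpos.le hLpos.le) hSpos.le)
            exact mul_le_mul (mul_le_mul cardj cardl (Nat.cast_nonneg _) (by linarith))
              cardk (Nat.cast_nonneg _) (by positivity)
    have e1 : (Δt * Δα * Δβ) ^ 2 * (((M : ℝ) * (L : ℝ) * (S : ℝ)) * t4)
        = (T ^ 2 * (αL - α0) ^ 2 * (βS - β0) ^ 2 * t4) *
            ((M : ℝ) * (L : ℝ) * (S : ℝ))⁻¹ := by
      rw [hΔt, hΔα, hΔβ]; field_simp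
    have h4 : ((M : ℝ) * (L : ℝ) * (S : ℝ))⁻¹
        ≤ 8 * (((M : ℝ) + 1) * ((L : ℝ) + 1) * ((S : ℝ) + 1))⁻¹ :=
      inv_coeff_aux (by positivity) (by positivity) hprod3
    calc ‖d‖ ^ 2 = (Δt * Δα * Δβ) ^ 2 * ‖∑ j' ∈ Finset.Icc 1 j, ∑ l' ∈ Finset.Icc 1 l,
          ∑ k' ∈ Finset.Icc 1 k, (DtDaDb j' l' k' - P (DtDaDb j' l' k'))‖ ^ 2 := by
          rw [hd, norm_smul, mul_pow, Real.norm_eq_abs, sq_abs]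
      _ ≤ (Δt * Δα * Δβ) ^ 2 * (((M : ℝ) * (L : ℝ) * (S : ℝ)) * t4) :=
          mul_le_mul_of_nonneg_left h3 (sq_nonneg _)
      _ = (T ^ 2 * (αL - α0) ^ 2 * (βS - β0) ^ 2 * t4) *
            ((M : ℝ) * (L : ℝ) * (S : ℝ))⁻¹ := e1
      _ ≤ (T ^ 2 * (αL - α0) ^ 2 * (βS - β0) ^ 2 * t4) *
            (8 * (((M : ℝ) + 1) * ((L : ℝ) + 1) * ((S : ℝ) + 1))⁻¹) :=
          mul_le_mul_of_nonneg_left h4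
            (mul_nonneg (mul_nonneg (mul_nonneg (sq_nonneg T) (sq_nonneg _)) (sq_nonneg _)) ht4n)
      _ = 8 * T ^ 2 * (αL - α0) ^ 2 * (βS - β0) ^ 2 *
            (1 / (((M : ℝ) + 1) * ((L : ℝ) + 1) * ((S : ℝ) + 1)) * t4) := by ring
  -- quadrilateral inequality
  have hquad : ‖u j l k - P (u j l k)‖ ^ 2
      ≤ 4 * (‖a‖ ^ 2 + ‖b‖ ^ 2 + ‖c‖ ^ 2 + ‖d‖ ^ 2) := by
    rw [keyE]
    have h1 : ‖a + b + c + d‖ ≤ ‖a‖ + ‖b‖ + ‖c‖ + ‖d‖ := by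
      calc ‖a + b + c + d‖ ≤ ‖a + b + c‖ + ‖d‖ := norm_add_le _ _
        _ ≤ ‖a + b‖ + ‖c‖ + ‖d‖ := by have := norm_add_le (a + b) c; linarith
        _ ≤ ‖a‖ + ‖b‖ + ‖c‖ + ‖d‖ := by have := norm_add_le a b; linarith
    have h2 : ‖a + b + c + d‖ ^ 2 ≤ (‖a‖ + ‖b‖ + ‖c‖ + ‖d‖) ^ 2 :=
      pow_le_pow_left₀ (norm_nonneg _) h1 2
    exact h2.trans (four_sq_aux _ _ _ _)
  -- final assembly
  set Cm := max 1 (max (2 * T ^ 2) (max (4 * T ^ 2 * (αL - α0) ^ 2)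
      (8 * T ^ 2 * (αL - α0) ^ 2 * (βS - β0) ^ 2))) with hCm
  have c1 : (1 : ℝ) ≤ Cm := le_max_left _ _
  have c2 : 2 * T ^ 2 ≤ Cm := le_trans (le_max_left _ _) (le_max_right _ _)
  have c3 : 4 * T ^ 2 * (αL - α0) ^ 2 ≤ Cm :=
    le_trans (le_trans (le_max_left _ _) (le_max_right _ _)) (le_max_right _ _)
  have c4 : 8 * T ^ 2 * (αL - α0) ^ 2 * (βS - β0) ^ 2 ≤ Cm :=
    le_trans (le_trans (le_max_right _ _) (le_max_right _ _)) (le_max_right _ _)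
  have w2n : 0 ≤ 1 / ((M : ℝ) + 1) * t2 := mul_nonneg (by positivity) ht2n
  have w3n : 0 ≤ 1 / (((M : ℝ) + 1) * ((L : ℝ) + 1)) * t3 := mul_nonneg (by positivity) ht3n
  have w4n : 0 ≤ 1 / (((M : ℝ) + 1) * ((L : ℝ) + 1) * ((S : ℝ) + 1)) * t4 :=
    mul_nonneg (by positivity) ht4n
  have hFa : ‖a‖ ^ 2 ≤ Cm * t1 := hA.trans (le_mul_of_one_le_left ht1n c1)
  have hFb : ‖b‖ ^ 2 ≤ Cm * (1 / ((M : ℝ) + 1) * t2) :=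
    hB.trans (mul_le_mul_of_nonneg_right c2 w2n)
  have hFc : ‖c‖ ^ 2 ≤ Cm * (1 / (((M : ℝ) + 1) * ((L : ℝ) + 1)) * t3) :=
    hC.trans (mul_le_mul_of_nonneg_right c3 w3n)
  have hFd : ‖d‖ ^ 2 ≤ Cm * (1 / (((M : ℝ) + 1) * ((L : ℝ) + 1) * ((S : ℝ) + 1)) * t4) :=
    hD.trans (mul_le_mul_of_nonneg_right c4 w4n)
  calc ‖u j l k - P (u j l k)‖ ^ 2
      ≤ 4 * (‖a‖ ^ 2 + ‖b‖ ^ 2 + ‖c‖ ^ 2 + ‖d‖ ^ 2) := hquad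
    _ ≤ 4 * (Cm * t1 + Cm * (1 / ((M : ℝ) + 1) * t2)
          + Cm * (1 / (((M : ℝ) + 1) * ((L : ℝ) + 1)) * t3)
          + Cm * (1 / (((M : ℝ) + 1) * ((L : ℝ) + 1) * ((S : ℝ) + 1)) * t4)) := by
        linarith
    _ = 4 * Cm * (t1 + 1 / ((M : ℝ) + 1) * t2
          + 1 / (((M : ℝ) + 1) * ((L : ℝ) + 1)) * t3
          + 1 / (((M : ℝ) + 1) * ((L : ℝ) + 1) * ((S : ℝ) + 1)) * t4) := by ring
    _ = 4 * Cm * Λ := by rw [hsum]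
end

section
/- With the setup of the POD modes: for 1 ≤ r ≤ d, letting P^r be the orthogonal projection onto span{φ_1, ..., φ_r}, it holds that (1/N) Σ_{j=1}^{N} ‖y_j - P^r y_j‖²_H = Σ_{k=r+1}^{d} λ_k. -/
open scoped RealInnerProductSpace

/-- POD eigenvalue-tail identity: the mean squared projection error of the
snapshots onto the span of the first `r` POD modes equals the tail of the
eigenvalues, `(1/N) ∑_j ‖y_j - P^r y_j‖² = ∑_{k > r} λ_k`.  Here `P^r` is the
orthogonal projection onto `span{φ_1, …, φ_r}`, which by orthonormality of the
modes is `P^r x = ∑_{k < r} ⟪φ_k, x⟫ φ_k`. -/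
theorem pod_eigenvalue_tail_identity
    {H : Type*} [NormedAddCommGroup H] [InnerProductSpace ℝ H]
    (N d : ℕ) (hN : 0 < N)
    (y : Fin N → H) (lam : Fin d → ℝ) (hlam : ∀ k, 0 < lam k)
    (v : Fin d → Fin N → ℝ)
    (heig : ∀ k i, (1 / (N : ℝ)) * ∑ j, ⟪y i, y j⟫ * v k j = lam k * v k i)
    (horth : ∀ k m, ∑ j, v k j * v m j = if k = m then (1 : ℝ) else 0)
    (hspan : ∀ i : Fin N, y i ∈ Submodule.span ℝ
        (Set.range fun k : Fin d => (1 / (Real.sqrt N * Real.sqrt (lam k))) •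
          ∑ j, v k j • y j))
    (φ : Fin d → H)
    (hφ : ∀ k, φ k = (1 / (Real.sqrt N * Real.sqrt (lam k))) • ∑ j, v k j • y j)
    (r : ℕ) (hr1 : 1 ≤ r) (hrd : r ≤ d)
    (P : H → H)
    (hP : ∀ x, P x = ∑ k ∈ Finset.univ.filter (fun k : Fin d => (k : ℕ) < r),
        ⟪φ k, x⟫ • φ k) :
    (1 / (N : ℝ)) * ∑ j, ‖y j - P (y j)‖ ^ 2 =
      ∑ k ∈ Finset.univ.filter (fun k : Fin d => r ≤ (k : ℕ)), lam k := by
  classical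
  have hNpos : (0 : ℝ) < N := by exact_mod_cast hN
  have hsN : (0 : ℝ) < Real.sqrt N := Real.sqrt_pos.mpr hNpos
  have hsl : ∀ k, (0 : ℝ) < Real.sqrt (lam k) := fun k => Real.sqrt_pos.mpr (hlam k)
  -- inner products of modes with snapshots
  have hinner : ∀ (k : Fin d) (j : Fin N),
      ⟪φ k, y j⟫ = Real.sqrt N * Real.sqrt (lam k) * v k j := by
    intro k j
    have hsum : ∑ i, v k i * ⟪y i, y j⟫ = N * (lam k * v k j) := by
      have h := heig k j
      have : ∑ i, ⟪y j, y i⟫ * v k i = N * (lam k * v k j) := by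
        field_simp at h
        linarith [h]
      rw [← this]
      exact Finset.sum_congr rfl fun i _ => by rw [real_inner_comm, mul_comm]
    rw [hφ, real_inner_smul_left, sum_inner]
    simp_rw [real_inner_smul_left]
    rw [hsum]
    have hN2 : Real.sqrt N * Real.sqrt N = (N : ℝ) := Real.mul_self_sqrt hNpos.le
    have hl2 : Real.sqrt (lam k) * Real.sqrt (lam k) = lam k :=
      Real.mul_self_sqrt (hlam k).le
    have hre : (N : ℝ) * (lam k * v k j) =
        (Real.sqrt N * Real.sqrt (lam k)) * (Real.sqrt N * Real.sqrt (lam k) * v k j) := by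
      rw [show (Real.sqrt N * Real.sqrt (lam k)) * (Real.sqrt N * Real.sqrt (lam k) * v k j)
          = (Real.sqrt N * Real.sqrt N) * ((Real.sqrt (lam k) * Real.sqrt (lam k)) * v k j)
        from by ring, hN2, hl2]
    rw [hre, one_div, inv_mul_cancel_left₀ (mul_pos hsN (hsl k)).ne']
  -- orthonormality of the modes
  have hON : Orthonormal ℝ φ := by
    rw [orthonormal_iff_ite]
    intro k m
    have step1 : ⟪φ k, φ m⟫ =
        (1 / (Real.sqrt N * Real.sqrt (lam m))) *
          ∑ j, v m j * (Real.sqrt N * Real.sqrt (lam k) * v k j) := by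
      rw [hφ m, real_inner_smul_right, inner_sum]
      congr 1
      exact Finset.sum_congr rfl fun j _ => by rw [real_inner_smul_right, hinner]
    have step2 : (1 / (Real.sqrt N * Real.sqrt (lam m))) *
          ∑ j, v m j * (Real.sqrt N * Real.sqrt (lam k) * v k j)
        = (Real.sqrt (lam k) / Real.sqrt (lam m)) * ∑ j, v k j * v m j := by
      rw [Finset.mul_sum, Finset.mul_sum]
      refine Finset.sum_congr rfl fun j _ => ?_
      field_simp
    rw [step1, step2, horth k m]
    by_cases h : k = m
    · subst h
      simp [div_self (hsl k).ne']
    · simp [h]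
  -- expansion of the snapshots
  have hexp : ∀ j : Fin N, y j = ∑ k, ⟪φ k, y j⟫ • φ k := by
    intro j
    have hsp : y j ∈ Submodule.span ℝ (Set.range φ) := by
      have : (fun k : Fin d => (1 / (Real.sqrt N * Real.sqrt (lam k))) •
          ∑ i, v k i • y i) = φ := by
        funext k; rw [hφ]
      rw [← this]
      exact hspan j
    obtain ⟨c, hc⟩ := (Submodule.mem_span_range_iff_exists_fun ℝ).1 hsp
    have hck : ∀ m, c m = ⟪φ m, y j⟫ := by
      intro m
      rw [← hc, hON.inner_right_fintype]
    calc y j = ∑ i, c i • φ i := hc.symm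
      _ = ∑ k, ⟪φ k, y j⟫ • φ k :=
          Finset.sum_congr rfl fun m _ => by rw [← hck m]
  -- the residual
  set t : Finset (Fin d) := Finset.univ.filter (fun k : Fin d => r ≤ (k : ℕ)) with ht
  have hts : t = Finset.univ.filter (fun k : Fin d => ¬ (k : ℕ) < r) := by
    apply Finset.filter_congr
    intro k _
    simp [not_lt]
  have hres : ∀ j : Fin N, y j - P (y j) = ∑ k ∈ t, ⟪φ k, y j⟫ • φ k := by
    intro j
    rw [hP, hts]
    nth_rewrite 1 [hexp j]
    rw [← Finset.sum_filter_add_sum_filter_not Finset.univ (fun k : Fin d => (k : ℕ) < r)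
      (fun k => ⟪φ k, y j⟫ • φ k)]
    abel
  -- norm of the residual
  have hnorm : ∀ j : Fin N, ‖y j - P (y j)‖ ^ 2 = ∑ k ∈ t, ⟪φ k, y j⟫ ^ 2 := by
    intro j
    rw [hres j, ← real_inner_self_eq_norm_sq, hON.inner_sum]
    exact Finset.sum_congr rfl fun k _ => by simp [sq]
  calc (1 / (N : ℝ)) * ∑ j, ‖y j - P (y j)‖ ^ 2
      = (1 / (N : ℝ)) * ∑ k ∈ t, ∑ j, ⟪φ k, y j⟫ ^ 2 := by
        rw [Finset.sum_comm]
        simp_rw [hnorm]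
    _ = ∑ k ∈ t, lam k := by
        rw [Finset.mul_sum]
        refine Finset.sum_congr rfl fun k _ => ?_
        have : ∑ j, ⟪φ k, y j⟫ ^ 2 = N * lam k := by
          simp_rw [hinner]
          have := horth k k
          rw [if_pos rfl] at this
          have h2 : ∑ j, (Real.sqrt N * Real.sqrt (lam k) * v k j) ^ 2
              = (Real.sqrt N * Real.sqrt (lam k)) ^ 2 * ∑ j, v k j * v k j := by
            rw [Finset.mul_sum]
            exact Finset.sum_congr rfl fun j _ => by ring
          rw [h2, this, mul_one, mul_pow, Real.sq_sqrt hNpos.le, Real.sq_sqrt (hlam k).le]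
        rw [this]
        field_simp
end

section
/- Let H be a Hilbert space, f : [a,b] → H be C², I₂f its affine endpoint interpolant, and suppose ∫_a^b ‖f(μ)‖² dμ ≤ 3 ∫_a^b ‖(I₂f)(μ)‖² dμ + 3 ∫_a^b ‖f(μ) - (I₂f)(μ)‖² dμ is used. Then ∫_a^b ‖f(μ)‖² dμ ≤ C ( (b-a)(‖f(a)‖² + ‖f(b)‖²) + (b-a)⁴ ∫_a^b ‖f''(ν)‖² dν ) for an absolute constant C. -/
open Set intervalIntegral MeasureTheory

private lemma ftc_Icc {H : Type*} [NormedAddCommGroup H] [NormedSpace ℝ H] [CompleteSpace H]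
    {a b : ℝ} {F G : ℝ → H}
    (hF : ∀ t ∈ Set.Icc a b, HasDerivWithinAt F (G t) (Set.Icc a b) t)
    (hGc : ContinuousOn G (Set.Icc a b))
    {x y : ℝ} (hx : x ∈ Set.Icc a b) (hy : y ∈ Set.Icc a b) (hxy : x ≤ y) :
    ∫ t in x..y, G t = F y - F x := by
  have hsub : Set.Icc x y ⊆ Set.Icc a b := Set.Icc_subset_Icc hx.1 hy.2
  apply intervalIntegral.integral_eq_sub_of_hasDeriv_right_of_le hxy
  · intro t ht
    exact ((hF t (hsub ht)).continuousWithinAt).mono hsub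
  · intro t ht
    have hta : a < t := lt_of_le_of_lt hx.1 ht.1
    have htb : t < b := lt_of_lt_of_le ht.2 hy.2
    exact ((hF t ⟨hta.le, htb.le⟩).hasDerivAt (Icc_mem_nhds hta htb)).hasDerivWithinAt
  · exact (hGc.mono hsub).intervalIntegrable_of_Icc hxy

private lemma cauchy_schwarz_interval {a b : ℝ} (hab : a < b) {h : ℝ → ℝ}
    (hc : ContinuousOn h (Set.Icc a b)) :
    (∫ t in a..b, h t) ^ 2 ≤ (b - a) * ∫ t in a..b, (h t) ^ 2 := by
  set I := ∫ t in a..b, h t with hI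
  set J := ∫ t in a..b, (h t) ^ 2 with hJ
  have hint : IntervalIntegrable h volume a b := hc.intervalIntegrable_of_Icc hab.le
  have hint2 : IntervalIntegrable (fun t => (h t) ^ 2) volume a b :=
    (hc.pow 2).intervalIntegrable_of_Icc hab.le
  have key : 0 ≤ ∫ t in a..b, ((b - a) * h t - I) ^ 2 := by
    apply intervalIntegral.integral_nonneg hab.le
    intro t _
    exact sq_nonneg _
  have expand : (∫ t in a..b, ((b - a) * h t - I) ^ 2)
      = (b - a) ^ 2 * J - 2 * (b - a) * I * I + I ^ 2 * (b - a) := by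
    have : (fun t => ((b - a) * h t - I) ^ 2)
        = fun t => (b - a) ^ 2 * (h t) ^ 2 - (2 * (b - a) * I) * h t + I ^ 2 := by
      funext t; ring
    rw [this]
    rw [intervalIntegral.integral_add (((hint2.const_mul _).sub (hint.const_mul _)))
      intervalIntegrable_const,
      intervalIntegral.integral_sub (hint2.const_mul _) (hint.const_mul _),
      intervalIntegral.integral_const_mul, intervalIntegral.integral_const_mul,
      intervalIntegral.integral_const]
    simp only [smul_eq_mul]
    ring
  rw [expand] at key
  nlinarith [sq_nonneg (b - a), hab]

/-- `L²`-in-parameter bound via the affine endpoint interpolant (case `m = 2`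
of Lemma 5 of the paper):
`∫_a^b ‖f‖² ≤ C ((b-a)(‖f(a)‖² + ‖f(b)‖²) + (b-a)⁴ ∫_a^b ‖f''‖²)`. -/
theorem L2_parameter_interpolation_bound
    {H : Type*} [NormedAddCommGroup H] [InnerProductSpace ℝ H] [CompleteSpace H] :
    ∃ C : ℝ, 0 < C ∧
      ∀ (a b : ℝ), a < b →
        ∀ f : ℝ → H, ContDiffOn ℝ 2 f (Set.Icc a b) →
          (∫ μ in a..b, ‖f μ‖ ^ 2) ≤
            C * ((b - a) * (‖f a‖ ^ 2 + ‖f b‖ ^ 2)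
              + (b - a) ^ 4 * ∫ ν in a..b, ‖iteratedDerivWithin 2 f (Set.Icc a b) ν‖ ^ 2) := by
  refine ⟨12, by norm_num, ?_⟩
  intro a b hab f hf
  set s := Set.Icc a b with hs_def
  have hs : UniqueDiffOn ℝ s := uniqueDiffOn_Icc hab
  set g := derivWithin f s with hg_def
  set D := iteratedDerivWithin 2 f s with hD_def
  have ha : a ∈ s := Set.left_mem_Icc.2 hab.le
  have hb : b ∈ s := Set.right_mem_Icc.2 hab.le
  have hd : (0:ℝ) < b - a := sub_pos.2 hab
  -- derivative facts
  have hfd : ∀ t ∈ s, HasDerivWithinAt f (g t) s t := fun t ht =>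
    ((hf.differentiableOn (by norm_num)) t ht).hasDerivWithinAt
  have hg1 : ContDiffOn ℝ 1 g s := hf.derivWithin hs (by norm_num)
  have hgc : ContinuousOn g s := hg1.continuousOn
  have hDeq : ∀ t ∈ s, D t = derivWithin g s t := by
    intro t ht
    rw [hD_def, iteratedDerivWithin_succ]
    exact derivWithin_congr (fun u hu => congrFun iteratedDerivWithin_one u)
      (congrFun iteratedDerivWithin_one t)
  have hgd : ∀ t ∈ s, HasDerivWithinAt g (D t) s t := by
    intro t ht
    rw [hDeq t ht]
    exact ((hg1.differentiableOn (by norm_num)) t ht).hasDerivWithinAt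
  have hDc : ContinuousOn D s := hf.continuousOn_iteratedDerivWithin le_rfl hs
  have hDnc : ContinuousOn (fun t => ‖D t‖) s := hDc.norm
  set M2 : ℝ := ∫ t in a..b, ‖D t‖ with hM2_def
  set J2 : ℝ := ∫ t in a..b, ‖D t‖ ^ 2 with hJ2_def
  have hM2nn : 0 ≤ M2 :=
    intervalIntegral.integral_nonneg hab.le (fun t _ => norm_nonneg _)
  have hJ2nn : 0 ≤ J2 :=
    intervalIntegral.integral_nonneg hab.le (fun t _ => sq_nonneg _)
  -- g oscillation bound
  have hgosc : ∀ x ∈ s, ∀ y ∈ s, ‖g y - g x‖ ≤ M2 := by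
    have key : ∀ x ∈ s, ∀ y ∈ s, x ≤ y → ‖g y - g x‖ ≤ M2 := by
      intro x hx y hy hxy
      rw [← ftc_Icc hgd hDc hx hy hxy]
      calc ‖∫ t in x..y, D t‖ ≤ ∫ t in x..y, ‖D t‖ :=
            intervalIntegral.norm_integral_le_integral_norm hxy
        _ ≤ M2 := by
            apply intervalIntegral.integral_mono_interval hx.1 hxy hy.2
            · filter_upwards with t using norm_nonneg _
            · exact hDnc.intervalIntegrable_of_Icc hab.le
    intro x hx y hy
    rcases le_total x y with h | h
    · exact key x hx y hy h
    · rw [norm_sub_rev]; exact key y hy x hx h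
  -- intermediate: f b - f a = ∫ g
  have hfb : ∫ t in a..b, g t = f b - f a := ftc_Icc hfd hgc ha hb hab.le
  -- bound on g
  set A : ℝ := ‖f a‖ + ‖f b‖ + (b - a) * M2 with hA_def
  have hAnn : 0 ≤ A := by positivity
  have hgbd : ∀ t ∈ s, ‖g t‖ ≤ A / (b - a) := by
    intro t ht
    have hrep : ∫ u in a..b, (g t - g u) = (b - a) • g t - (f b - f a) := by
      rw [intervalIntegral.integral_sub intervalIntegrable_const
        (hgc.intervalIntegrable_of_Icc hab.le), hfb, intervalIntegral.integral_const]
    have hbd : ‖(b - a) • g t - (f b - f a)‖ ≤ M2 * |b - a| := by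
      rw [← hrep]
      apply intervalIntegral.norm_integral_le_of_norm_le_const
      intro u hu
      have hu' : u ∈ s := by
        rw [Set.uIoc_of_le hab.le] at hu
        exact ⟨hu.1.le, hu.2⟩
      exact hgosc u hu' t ht
    have h1 : (b - a) * ‖g t‖ ≤ ‖f b - f a‖ + M2 * (b - a) := by
      have := norm_sub_norm_le ((b - a) • g t) (f b - f a)
      rw [norm_smul, Real.norm_eq_abs, abs_of_pos hd] at this
      rw [abs_of_pos hd] at hbd
      linarith
    rw [le_div_iff₀ hd]
    have : ‖f b - f a‖ ≤ ‖f a‖ + ‖f b‖ := by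
      calc ‖f b - f a‖ ≤ ‖f b‖ + ‖f a‖ := norm_sub_le _ _
        _ = ‖f a‖ + ‖f b‖ := by ring
    rw [hA_def]; nlinarith
  -- pointwise bound on f
  set K : ℝ := 2 * ‖f a‖ + ‖f b‖ + (b - a) * M2 with hK_def
  have hKnn : 0 ≤ K := by positivity
  have hfbd : ∀ μ ∈ s, ‖f μ‖ ≤ K := by
    intro μ hμ
    have hrep : ∫ t in a..μ, g t = f μ - f a := ftc_Icc hfd hgc ha hμ hμ.1
    have hbd : ‖f μ - f a‖ ≤ A / (b - a) * |μ - a| := by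
      rw [← hrep]
      apply intervalIntegral.norm_integral_le_of_norm_le_const
      intro u hu
      have hu' : u ∈ s := by
        rw [Set.uIoc_of_le hμ.1] at hu
        exact ⟨hu.1.le, hu.2.trans hμ.2⟩
      exact hgbd u hu'
    have h2 : A / (b - a) * |μ - a| ≤ A := by
      rw [abs_of_nonneg (by linarith [hμ.1])]
      rw [div_mul_eq_mul_div, div_le_iff₀ hd]
      have h3 : μ - a ≤ b - a := by linarith [hμ.2]
      nlinarith
    have := norm_sub_norm_le (f μ) (f a)
    rw [hK_def, hA_def] at *
    linarith
  -- integral bound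
  have hfint : IntervalIntegrable (fun μ => ‖f μ‖ ^ 2) volume a b :=
    ((hf.continuousOn.norm).pow 2).intervalIntegrable_of_Icc hab.le
  have hmain : (∫ μ in a..b, ‖f μ‖ ^ 2) ≤ (b - a) * K ^ 2 := by
    have : (∫ μ in a..b, ‖f μ‖ ^ 2) ≤ ∫ _ in a..b, K ^ 2 := by
      apply intervalIntegral.integral_mono_on hab.le hfint intervalIntegrable_const
      intro t ht
      have := hfbd t ht
      nlinarith [norm_nonneg (f t)]
    simpa [intervalIntegral.integral_const, smul_eq_mul] using this
  -- Cauchy-Schwarz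
  have hCS : M2 ^ 2 ≤ (b - a) * J2 := cauchy_schwarz_interval hab hDnc
  -- final arithmetic
  have hKsq : (b - a) * K ^ 2 ≤
      12 * ((b - a) * (‖f a‖ ^ 2 + ‖f b‖ ^ 2) + (b - a) ^ 4 * J2) := by
    rw [hK_def]
    nlinarith [sq_nonneg (2 * ‖f a‖ - ‖f b‖), sq_nonneg (2 * ‖f a‖ - (b - a) * M2),
      sq_nonneg (‖f b‖ - (b - a) * M2), sq_nonneg ((b - a) * M2), norm_nonneg (f a),
      norm_nonneg (f b), mul_le_mul_of_nonneg_left hCS (by positivity : (0:ℝ) ≤ (b-a)^2),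
      hJ2nn, hM2nn, hd]
  linarith
end
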